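/- Suppose β > γ > 0 and κ = ((ζ₁−1) − (ζ₂−1)(β/γ)^{ζ₂−ζ₁}) / ((ζ₁−ζ₂)(β/γ)^{ζ₂−1}) (the first-order optimality relation for the dividend barrier). Then the two-barrier function is concave in its first argument on the continuation region: for all x₁, x₂ > 0 with γ ≤ x₁/x₂ ≤ β, one has ∂²G/∂x₁² (x₁, x₂; β, γ) ≤ 0. -/

import Mathlib

/-- The constant `C₁` of the two-barrier value function. -/
noncomputable def C1 (ζ₁ ζ₂ β γ κ : ℝ) : ℝ :=
  (1 - κ * β ^ (ζ₂ - 1) * γ ^ (1 - ζ₂)) /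
    (ζ₁ * (β ^ (ζ₁ - 1) - γ ^ (ζ₁ - ζ₂) * β ^ (ζ₂ - 1)))

/-- The constant `C₂` of the two-barrier value function. -/
noncomputable def C2 (ζ₁ ζ₂ β γ κ : ℝ) : ℝ :=
  (κ * γ ^ (1 - ζ₂) - C1 ζ₁ ζ₂ β γ κ * ζ₁ * γ ^ (ζ₁ - ζ₂)) / ζ₂

/-- The two-barrier value function `G(x₁, x₂; β, γ)` with dividend barrier `β`
and capital injection barrier `γ`. -/
noncomputable def G2 (ζ₁ ζ₂ β γ κ x₁ x₂ : ℝ) : ℝ :=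
  C1 ζ₁ ζ₂ β γ κ * x₁ ^ ζ₁ * x₂ ^ (1 - ζ₁)
    + C2 ζ₁ ζ₂ β γ κ * x₁ ^ ζ₂ * x₂ ^ (1 - ζ₂)

lemma deriv_aux (a b p q t : ℝ) (ht : 0 < t) :
    deriv (fun s : ℝ => a * s ^ p + b * s ^ q) t
      = a * p * t ^ (p - 1) + b * q * t ^ (q - 1) := by
  have h1 : HasDerivAt (fun s : ℝ => a * s ^ p) (a * (p * t ^ (p - 1))) t :=
    (Real.hasDerivAt_rpow_const (Or.inl ht.ne')).const_mul a
  have h2 : HasDerivAt (fun s : ℝ => b * s ^ q) (b * (q * t ^ (q - 1))) t :=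
    (Real.hasDerivAt_rpow_const (Or.inl ht.ne')).const_mul b
  have := (h1.add h2).deriv
  rw [show (fun s : ℝ => a * s ^ p + b * s ^ q) = (fun s => a * s ^ p) + (fun s => b * s ^ q) from rfl, this]; ring

lemma deriv2_aux (a b p q x : ℝ) (hx : 0 < x) :
    deriv (deriv (fun s : ℝ => a * s ^ p + b * s ^ q)) x
      = a * p * (p - 1) * x ^ (p - 2) + b * q * (q - 1) * x ^ (q - 2) := by
  have hev : deriv (fun s : ℝ => a * s ^ p + b * s ^ q)
      =ᶠ[nhds x] fun s => a * p * s ^ (p - 1) + b * q * s ^ (q - 1) := by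
    filter_upwards [eventually_gt_nhds hx] with t ht
    exact deriv_aux a b p q t ht
  rw [hev.deriv_eq, deriv_aux (a * p) (b * q) (p - 1) (q - 1) x hx,
    show p - 1 - 1 = p - 2 by ring, show q - 1 - 1 = q - 2 by ring]

lemma C1_eq (ζ₁ ζ₂ β γ : ℝ) (hζ₁ : ζ₁ < 0) (hζ₂ : 1 < ζ₂)
    (hγ : 0 < γ) (hβγ : γ < β) :
    C1 ζ₁ ζ₂ β γ (((ζ₁ - 1) - (ζ₂ - 1) * (β / γ) ^ (ζ₂ - ζ₁))
            / ((ζ₁ - ζ₂) * (β / γ) ^ (ζ₂ - 1)))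
      = (ζ₂ - 1) * β ^ (1 - ζ₁) / (ζ₁ * (ζ₂ - ζ₁)) := by
  have hβ : 0 < β := hγ.trans hβγ
  have hζlt : ζ₁ < ζ₂ := by linarith
  have hdg : (1 : ℝ) < β / γ := (one_lt_div hγ).mpr hβγ
  have hw1 : 1 < (β / γ) ^ (ζ₂ - ζ₁) :=
    Real.one_lt_rpow_iff_of_pos (by positivity) |>.mpr (Or.inl ⟨hdg, by linarith⟩)
  have hv0 : (0 : ℝ) < (β / γ) ^ (ζ₂ - 1) := Real.rpow_pos_of_pos (by positivity) _
  have hb1 : (0 : ℝ) < β ^ (ζ₁ - 1) := Real.rpow_pos_of_pos hβ _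
  have hv : β ^ (ζ₂ - 1) * γ ^ (1 - ζ₂) = (β / γ) ^ (ζ₂ - 1) := by
    rw [Real.div_rpow hβ.le hγ.le, show (1 : ℝ) - ζ₂ = -(ζ₂ - 1) by ring,
      Real.rpow_neg hγ.le, div_eq_mul_inv]
  have hb : β ^ (ζ₁ - 1) * β ^ (ζ₂ - ζ₁) = β ^ (ζ₂ - 1) := by
    rw [← Real.rpow_add hβ]; ring_nf
  have hg : γ ^ (ζ₁ - ζ₂) * β ^ (ζ₂ - 1) = β ^ (ζ₁ - 1) * (β / γ) ^ (ζ₂ - ζ₁) := by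
    rw [Real.div_rpow hβ.le hγ.le, show ζ₁ - ζ₂ = -(ζ₂ - ζ₁) by ring,
      Real.rpow_neg hγ.le, ← hb]
    field_simp
  have hinv : β ^ (1 - ζ₁) = (β ^ (ζ₁ - 1))⁻¹ := by
    rw [show (1 : ℝ) - ζ₁ = -(ζ₁ - 1) by ring, Real.rpow_neg hβ.le]
  have hden : β ^ (ζ₁ - 1) - β ^ (ζ₁ - 1) * (β / γ) ^ (ζ₂ - ζ₁) ≠ 0 := by nlinarith
  have hA : ζ₁ * (β ^ (ζ₁ - 1) - β ^ (ζ₁ - 1) * (β / γ) ^ (ζ₂ - ζ₁)) ≠ 0 :=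
    mul_ne_zero hζ₁.ne hden
  have hB : ζ₁ * (ζ₂ - ζ₁) ≠ 0 := mul_ne_zero hζ₁.ne (sub_pos.mpr hζlt).ne'
  unfold C1
  rw [mul_assoc, hv, hg, hinv, div_eq_div_iff hA hB]
  field_simp [hv0.ne', hb1.ne', sub_ne_zero.mpr hζlt.ne]
  ring

lemma C2_eq (ζ₁ ζ₂ β γ : ℝ) (hζ₁ : ζ₁ < 0) (hζ₂ : 1 < ζ₂)
    (hγ : 0 < γ) (hβγ : γ < β) :
    C2 ζ₁ ζ₂ β γ (((ζ₁ - 1) - (ζ₂ - 1) * (β / γ) ^ (ζ₂ - ζ₁))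
            / ((ζ₁ - ζ₂) * (β / γ) ^ (ζ₂ - 1)))
      = (1 - ζ₁) * β ^ (1 - ζ₂) / (ζ₂ * (ζ₂ - ζ₁)) := by
  have hβ : 0 < β := hγ.trans hβγ
  have hζlt : ζ₁ < ζ₂ := by linarith
  have hb2 : (0 : ℝ) < β ^ (ζ₂ - 1) := Real.rpow_pos_of_pos hβ _
  have hc : (0 : ℝ) < γ ^ (ζ₂ - 1) := Real.rpow_pos_of_pos hγ _
  have he : (0 : ℝ) < β ^ (ζ₂ - ζ₁) := Real.rpow_pos_of_pos hβ _
  have hf : (0 : ℝ) < γ ^ (ζ₂ - ζ₁) := Real.rpow_pos_of_pos hγ _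
  have h1 : (β / γ) ^ (ζ₂ - ζ₁) = β ^ (ζ₂ - ζ₁) / γ ^ (ζ₂ - ζ₁) :=
    Real.div_rpow hβ.le hγ.le _
  have h2 : (β / γ) ^ (ζ₂ - 1) = β ^ (ζ₂ - 1) / γ ^ (ζ₂ - 1) :=
    Real.div_rpow hβ.le hγ.le _
  have h3 : γ ^ (1 - ζ₂) = (γ ^ (ζ₂ - 1))⁻¹ := by
    rw [show (1 : ℝ) - ζ₂ = -(ζ₂ - 1) by ring, Real.rpow_neg hγ.le]
  have h4 : β ^ (1 - ζ₁) = (β ^ (ζ₂ - 1))⁻¹ * β ^ (ζ₂ - ζ₁) := by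
    rw [show (1 : ℝ) - ζ₁ = -(ζ₂ - 1) + (ζ₂ - ζ₁) by ring, Real.rpow_add hβ,
      Real.rpow_neg hβ.le]
  have h5 : γ ^ (ζ₁ - ζ₂) = (γ ^ (ζ₂ - ζ₁))⁻¹ := by
    rw [show ζ₁ - ζ₂ = -(ζ₂ - ζ₁) by ring, Real.rpow_neg hγ.le]
  have h6 : β ^ (1 - ζ₂) = (β ^ (ζ₂ - 1))⁻¹ := by
    rw [show (1 : ℝ) - ζ₂ = -(ζ₂ - 1) by ring, Real.rpow_neg hβ.le]
  have hζ₂0 : (ζ₂ : ℝ) ≠ 0 := by positivity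
  have hζd : ζ₁ - ζ₂ ≠ 0 := sub_ne_zero.mpr hζlt.ne
  have hζd' : ζ₂ - ζ₁ ≠ 0 := sub_ne_zero.mpr hζlt.ne'
  have hk : (((ζ₁ - 1) - (ζ₂ - 1) * (β ^ (ζ₂ - ζ₁) / γ ^ (ζ₂ - ζ₁)))
        / ((ζ₁ - ζ₂) * (β ^ (ζ₂ - 1) / γ ^ (ζ₂ - 1)))) * (γ ^ (ζ₂ - 1))⁻¹
      = ((ζ₁ - 1) * γ ^ (ζ₂ - ζ₁) - (ζ₂ - 1) * β ^ (ζ₂ - ζ₁))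
        / ((ζ₁ - ζ₂) * β ^ (ζ₂ - 1) * γ ^ (ζ₂ - ζ₁)) := by
    field_simp
  have hk2 : (ζ₂ - 1) * ((β ^ (ζ₂ - 1))⁻¹ * β ^ (ζ₂ - ζ₁)) / (ζ₁ * (ζ₂ - ζ₁)) * ζ₁
        * (γ ^ (ζ₂ - ζ₁))⁻¹
      = (ζ₂ - 1) * β ^ (ζ₂ - ζ₁) / ((ζ₂ - ζ₁) * β ^ (ζ₂ - 1) * γ ^ (ζ₂ - ζ₁)) := by
    rw [eq_div_iff (by exact mul_ne_zero (mul_ne_zero hζd' hb2.ne') hf.ne')]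
    field_simp [hζ₁.ne]
  unfold C2
  rw [C1_eq ζ₁ ζ₂ β γ hζ₁ hζ₂ hγ hβγ, h1, h2, h3, h4, h5, h6, hk, hk2]
  rw [div_eq_div_iff hζ₂0 (mul_ne_zero hζ₂0 hζd')]
  field_simp
  ring

/-- under the first-order optimality relation for `κ`, the
two-barrier value function is concave in its first argument on the
continuation region `γ ≤ x₁/x₂ ≤ β`. -/
theorem stmt_16 (μA μL δ σA σL ρ ζ₁ ζ₂ β γ κ : ℝ)
    (hσA : 0 < σA) (hσL : 0 < σL) (hρ₁ : -1 < ρ) (hρ₂ : ρ < 1)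
    (hμ : μL < μA) (hδ : μA < δ)
    (hroot₁ : (1 / 2) * (σA ^ 2 + σL ^ 2 - 2 * ρ * σA * σL) * ζ₁ * (ζ₁ - 1)
      + (μA - μL) * ζ₁ + (μL - δ) = 0)
    (hroot₂ : (1 / 2) * (σA ^ 2 + σL ^ 2 - 2 * ρ * σA * σL) * ζ₂ * (ζ₂ - 1)
      + (μA - μL) * ζ₂ + (μL - δ) = 0)
    (hζlt : ζ₁ < ζ₂) (hζ₁ : ζ₁ < 0) (hζ₂ : 1 < ζ₂)
    (hγ : 0 < γ) (hβγ : γ < β) (hκ1 : 1 < κ)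
    (hκ : κ = ((ζ₁ - 1) - (ζ₂ - 1) * (β / γ) ^ (ζ₂ - ζ₁))
            / ((ζ₁ - ζ₂) * (β / γ) ^ (ζ₂ - 1))) :
    ∀ x₁ x₂ : ℝ, 0 < x₁ → 0 < x₂ → γ ≤ x₁ / x₂ → x₁ / x₂ ≤ β →
      deriv (deriv (fun t => G2 ζ₁ ζ₂ β γ κ t x₂)) x₁ ≤ 0 := by
  intro x₁ x₂ hx₁ hx₂ hγle hβle
  have hβ : 0 < β := hγ.trans hβγ
  subst hκ
  have hfun : (fun t => G2 ζ₁ ζ₂ β γ (((ζ₁ - 1) - (ζ₂ - 1) * (β / γ) ^ (ζ₂ - ζ₁))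
            / ((ζ₁ - ζ₂) * (β / γ) ^ (ζ₂ - 1))) t x₂)
      = fun t : ℝ =>
        (C1 ζ₁ ζ₂ β γ (((ζ₁ - 1) - (ζ₂ - 1) * (β / γ) ^ (ζ₂ - ζ₁))
            / ((ζ₁ - ζ₂) * (β / γ) ^ (ζ₂ - 1))) * x₂ ^ (1 - ζ₁)) * t ^ ζ₁
        + (C2 ζ₁ ζ₂ β γ (((ζ₁ - 1) - (ζ₂ - 1) * (β / γ) ^ (ζ₂ - ζ₁))
            / ((ζ₁ - ζ₂) * (β / γ) ^ (ζ₂ - 1))) * x₂ ^ (1 - ζ₂)) * t ^ ζ₂ := by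
    funext t
    simp only [G2]
    ring
  rw [hfun, deriv2_aux _ _ _ _ _ hx₁,
    C1_eq ζ₁ ζ₂ β γ hζ₁ hζ₂ hγ hβγ, C2_eq ζ₁ ζ₂ β γ hζ₁ hζ₂ hγ hβγ]
  -- key comparison
  have hy0 : 0 < x₁ / (β * x₂) := div_pos hx₁ (by positivity)
  have hy1 : x₁ / (β * x₂) ≤ 1 := by
    rw [div_le_one (by positivity)]
    calc x₁ = (x₁ / x₂) * x₂ := by field_simp
    _ ≤ β * x₂ := mul_le_mul_of_nonneg_right hβle hx₂.le
  have hid : ∀ z : ℝ, β ^ (1 - z) * x₂ ^ (1 - z) * x₁ ^ (z - 2)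
      = (x₁ / (β * x₂)) ^ z * (β * x₂ * x₁ ^ ((-2 : ℝ))) := by
    intro z
    have h2pos : (0 : ℝ) < x₁ ^ ((2 : ℝ)) := Real.rpow_pos_of_pos hx₁ _
    simp only [Real.div_rpow hx₁.le (show (0:ℝ) ≤ β * x₂ by positivity),
      Real.mul_rpow hβ.le hx₂.le, Real.rpow_sub hβ, Real.rpow_sub hx₂,
      Real.rpow_sub hx₁, Real.rpow_one, Real.rpow_neg hx₁.le]
    field_simp
  have key : β ^ (1 - ζ₂) * x₂ ^ (1 - ζ₂) * x₁ ^ (ζ₂ - 2)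
      ≤ β ^ (1 - ζ₁) * x₂ ^ (1 - ζ₁) * x₁ ^ (ζ₁ - 2) := by
    rw [hid ζ₂, hid ζ₁]
    refine mul_le_mul_of_nonneg_right
      (Real.rpow_le_rpow_of_exponent_ge hy0 hy1 hζlt.le) ?_
    have : (0 : ℝ) < x₁ ^ ((-2 : ℝ)) := Real.rpow_pos_of_pos hx₁ _
    positivity
  have hD : (0 : ℝ) < (1 - ζ₁) * (ζ₂ - 1) / (ζ₂ - ζ₁) :=
    div_pos (mul_pos (by linarith) (by linarith)) (by linarith)
  have heq : ((ζ₂ - 1) * β ^ (1 - ζ₁) / (ζ₁ * (ζ₂ - ζ₁)) * x₂ ^ (1 - ζ₁)) * ζ₁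
        * (ζ₁ - 1) * x₁ ^ (ζ₁ - 2)
      + ((1 - ζ₁) * β ^ (1 - ζ₂) / (ζ₂ * (ζ₂ - ζ₁)) * x₂ ^ (1 - ζ₂)) * ζ₂
        * (ζ₂ - 1) * x₁ ^ (ζ₂ - 2)
      = ((1 - ζ₁) * (ζ₂ - 1) / (ζ₂ - ζ₁))
        * (β ^ (1 - ζ₂) * x₂ ^ (1 - ζ₂) * x₁ ^ (ζ₂ - 2)
            - β ^ (1 - ζ₁) * x₂ ^ (1 - ζ₁) * x₁ ^ (ζ₁ - 2)) := by
    have hζ₂0 : (ζ₂ : ℝ) ≠ 0 := by positivity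
    have hζ₁0 : (ζ₁ : ℝ) ≠ 0 := hζ₁.ne
    have hζd' : ζ₂ - ζ₁ ≠ 0 := sub_ne_zero.mpr hζlt.ne'
    field_simp
    ring
  rw [heq]
  have := mul_le_mul_of_nonneg_left (sub_nonpos.mpr key) hD.le
  simpa using this
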